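/- The following are equivalent for a separable metrisable topological group G: (1) G admits a maximal compatible left-invariant metric; (2) G is generated by an open set having property (OB) relative to G; (3) G has the local property (OB) and G is not the union of a countable chain of proper open subgroups. -/

import Mathlib

open Filter Topology
open scoped Pointwise

/-- A (plain) metric given as a distance function. -/
def IsMetric {G : Type*} (d : G → G → ℝ) : Prop :=
  (∀ x y, d x y = 0 ↔ x = y) ∧ (∀ x y, d x y = d y x) ∧ ∀ x y z, d x z ≤ d x y + d y z

/-- The metric `d` induces the topology of `G`. -/
def IsCompatible (G : Type*) [TopologicalSpace G] (d : G → G → ℝ) : Prop :=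
  ∀ (x : G) (s : Set G), s ∈ nhds x ↔ ∃ ε > (0 : ℝ), {y : G | d x y < ε} ⊆ s

/-- A compatible left-invariant metric on a topological group. -/
def IsCompatibleLeftInvariantMetric (G : Type*) [Group G] [TopologicalSpace G]
    (d : G → G → ℝ) : Prop :=
  IsMetric d ∧ IsCompatible G d ∧ ∀ h g f : G, d (h * g) (h * f) = d g f

/-- A set has finite diameter with respect to `d`. -/
def FiniteDiam {G : Type*} (d : G → G → ℝ) (A : Set G) : Prop :=
  ∃ C : ℝ, ∀ x ∈ A, ∀ y ∈ A, d x y ≤ C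

/-- `A` has property (OB) relative to `G`: finite diameter for every compatible
left-invariant metric. -/
def HasRelPropOB (G : Type*) [Group G] [TopologicalSpace G] (A : Set G) : Prop :=
  ∀ d : G → G → ℝ, IsCompatibleLeftInvariantMetric G d → FiniteDiam d A

/-- A sequence tends to infinity in `G` if some compatible left-invariant metric
witnesses `d (g n) 1 → ∞`. -/
def TendsToInfinity (G : Type*) [Group G] [TopologicalSpace G] (g : ℕ → G) : Prop :=
  ∃ d : G → G → ℝ, IsCompatibleLeftInvariantMetric G d ∧
    Filter.Tendsto (fun n => d (g n) 1) Filter.atTop Filter.atTop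

/-- A compatible left-invariant metric is metrically proper if `d (g n) 1 → ∞`
whenever `g n → ∞`. -/
def MetricallyProperMetric (G : Type*) [Group G] [TopologicalSpace G]
    (d : G → G → ℝ) : Prop :=
  ∀ g : ℕ → G, TendsToInfinity G g →
    Filter.Tendsto (fun n => d (g n) 1) Filter.atTop Filter.atTop

section BasicMetric

variable {G : Type*} {d : G → G → ℝ}

lemma IsMetric.nonneg (hd : IsMetric d) (x y : G) : 0 ≤ d x y := by
  have h0 : d x x = 0 := (hd.1 x x).2 rfl
  have := hd.2.2 x y x
  rw [h0, hd.2.1 y x] at this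
  linarith

variable [Group G] [TopologicalSpace G]

namespace IsCompatibleLeftInvariantMetric

variable (hd : IsCompatibleLeftInvariantMetric G d)
include hd

lemma metric : IsMetric d := hd.1
lemma compat : IsCompatible G d := hd.2.1
lemma linv (h g f : G) : d (h * g) (h * f) = d g f := hd.2.2 h g f

lemma nonneg' (x y : G) : 0 ≤ d x y := hd.1.nonneg x y

lemma eq_one_dist (x y : G) : d x y = d 1 (x⁻¹ * y) := by
  have := hd.2.2 x⁻¹ x y; rw [inv_mul_cancel] at this; exact this.symm

lemma one_dist_inv (x : G) : d 1 x⁻¹ = d x 1 := by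
  have := hd.2.2 x⁻¹ x 1; rwa [inv_mul_cancel, mul_one] at this

lemma one_dist_inv' (x : G) : d 1 x⁻¹ = d 1 x := by
  rw [hd.one_dist_inv, hd.1.2.1 x 1]

lemma one_dist_mul (x y : G) : d 1 (x * y) ≤ d 1 x + d 1 y := by
  have h := hd.1.2.2 1 x (x * y)
  have : d x (x * y) = d 1 y := by
    have := hd.2.2 x 1 y; rwa [mul_one] at this
  linarith

lemma one_dist_list_prod (L : List G) :
    d 1 L.prod ≤ (L.map (fun v => d 1 v)).sum := by
  induction L with
  | nil => simp [(hd.1.1 1 1).2 rfl]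
  | cons a t ih =>
      simp only [List.prod_cons, List.map_cons, List.sum_cons]
      calc d 1 (a * t.prod) ≤ d 1 a + d 1 t.prod := hd.one_dist_mul a t.prod
        _ ≤ d 1 a + (t.map (fun v => d 1 v)).sum := by linarith

/-- balls are neighborhoods -/
lemma ball_mem_nhds (x : G) {ε : ℝ} (hε : 0 < ε) : {y : G | d x y < ε} ∈ nhds x :=
  (hd.2.1 x _).2 ⟨ε, hε, subset_rfl⟩

end IsCompatibleLeftInvariantMetric

end BasicMetric

section WordDist

variable {G : Type*} [Group G]

/-- The set of achievable word-sums from `x` to `y` with letters in `P` and weight `w`. -/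
def wordSums (P : Set G) (w : G → ℝ) (x y : G) : Set ℝ :=
  {r | ∃ L : List G, (∀ v ∈ L, v ∈ P) ∧ x * L.prod = y ∧ (L.map w).sum = r}

/-- The chain (word) distance. -/
noncomputable def chainDist (P : Set G) (w : G → ℝ) (x y : G) : ℝ :=
  sInf (wordSums P w x y)

variable {P : Set G} {w : G → ℝ}

lemma wordSums_linv (h x y : G) : wordSums P w (h * x) (h * y) = wordSums P w x y := by
  ext r
  constructor <;> rintro ⟨L, hL, hprod, rfl⟩
  · refine ⟨L, hL, ?_, rfl⟩
    rw [mul_assoc] at hprod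
    exact mul_left_cancel hprod
  · exact ⟨L, hL, by rw [mul_assoc, hprod], rfl⟩

lemma chainDist_linv (h x y : G) : chainDist P w (h * x) (h * y) = chainDist P w x y := by
  unfold chainDist; rw [wordSums_linv]

lemma wordSums_nonneg (hw : ∀ v ∈ P, 0 ≤ w v) {x y : G} {r : ℝ} (hr : r ∈ wordSums P w x y) :
    0 ≤ r := by
  obtain ⟨L, hL, -, rfl⟩ := hr
  apply List.sum_nonneg
  intro a ha
  obtain ⟨v, hv, rfl⟩ := List.mem_map.1 ha
  exact hw v (hL v hv)

lemma bddBelow_wordSums (hw : ∀ v ∈ P, 0 ≤ w v) (x y : G) : BddBelow (wordSums P w x y) :=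
  ⟨0, fun r hr => wordSums_nonneg hw hr⟩

lemma self_mem_wordSums (x : G) : (0 : ℝ) ∈ wordSums P w x x :=
  ⟨[], by simp, by simp, by simp⟩

lemma single_mem_wordSums {x y : G} (h : x⁻¹ * y ∈ P) : w (x⁻¹ * y) ∈ wordSums P w x y :=
  ⟨[x⁻¹ * y], by simpa using h, by simp, by simp⟩

lemma chainDist_nonneg (hw : ∀ v ∈ P, 0 ≤ w v) {x y : G}
    (hne : (wordSums P w x y).Nonempty) : 0 ≤ chainDist P w x y :=
  le_csInf hne fun r hr => wordSums_nonneg hw hr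

lemma chainDist_self (hw : ∀ v ∈ P, 0 ≤ w v) (x : G) : chainDist P w x x = 0 :=
  le_antisymm (csInf_le (bddBelow_wordSums hw x x) (self_mem_wordSums x))
    (chainDist_nonneg hw ⟨0, self_mem_wordSums x⟩)

lemma chainDist_le_single (hw : ∀ v ∈ P, 0 ≤ w v) {x y : G} (h : x⁻¹ * y ∈ P) :
    chainDist P w x y ≤ w (x⁻¹ * y) :=
  csInf_le (bddBelow_wordSums hw x y) (single_mem_wordSums h)

/-- lower bound transfer: if `φ (L.prod) ≤ Σ w` for every word, then `φ (x⁻¹ y) ≤ chainDist`. -/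
lemma le_chainDist (φ : G → ℝ) {x y : G}
    (hφ : ∀ L : List G, (∀ v ∈ L, v ∈ P) → φ L.prod ≤ (L.map w).sum)
    (hne : (wordSums P w x y).Nonempty) :
    φ (x⁻¹ * y) ≤ chainDist P w x y := by
  apply le_csInf hne
  rintro r ⟨L, hL, hprod, rfl⟩
  have : x⁻¹ * y = L.prod := by rw [← hprod]; group
  rw [this]; exact hφ L hL

end WordDist

section WordDist2

variable {G : Type*} [Group G] {P : Set G} {w : G → ℝ}

lemma wordSums_symm (hsym : ∀ v ∈ P, v⁻¹ ∈ P) (hwsym : ∀ v ∈ P, w v⁻¹ = w v)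
    (x y : G) : wordSums P w x y ⊆ wordSums P w y x := by
  rintro r ⟨L, hL, hprod, rfl⟩
  refine ⟨(L.map (fun v => v⁻¹)).reverse, ?_, ?_, ?_⟩
  · intro v hv
    simp only [List.mem_reverse, List.mem_map] at hv
    obtain ⟨u, hu, rfl⟩ := hv
    exact hsym u (hL u hu)
  · have : (L.map (fun v => v⁻¹)).reverse.prod = L.prod⁻¹ := by
      rw [List.prod_reverse_noncomm]
      simp
    rw [this, ← hprod]
    group
  · rw [List.map_reverse, List.sum_reverse, List.map_map]
    congr 1
    apply List.map_congr_left
    intro v hv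
    exact hwsym v (hL v hv)

lemma chainDist_symm (hw : ∀ v ∈ P, 0 ≤ w v) (hsym : ∀ v ∈ P, v⁻¹ ∈ P)
    (hwsym : ∀ v ∈ P, w v⁻¹ = w v) (x y : G) :
    chainDist P w x y = chainDist P w y x := by
  have hset : wordSums P w x y = wordSums P w y x :=
    le_antisymm (wordSums_symm hsym hwsym x y) (wordSums_symm hsym hwsym y x)
  unfold chainDist
  rw [hset]

lemma wordSums_add (x y z : G) {r s : ℝ} (hr : r ∈ wordSums P w x y)
    (hs : s ∈ wordSums P w y z) : r + s ∈ wordSums P w x z := by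
  obtain ⟨L, hL, hLp, rfl⟩ := hr
  obtain ⟨M, hM, hMp, rfl⟩ := hs
  refine ⟨L ++ M, ?_, ?_, ?_⟩
  · intro v hv; rcases List.mem_append.1 hv with h | h
    exacts [hL v h, hM v h]
  · rw [List.prod_append, ← mul_assoc, hLp, hMp]
  · rw [List.map_append, List.sum_append]

lemma chainDist_triangle (hw : ∀ v ∈ P, 0 ≤ w v)
    (hne : ∀ x y : G, (wordSums P w x y).Nonempty) (x y z : G) :
    chainDist P w x z ≤ chainDist P w x y + chainDist P w y z := by
  apply le_of_forall_pos_le_add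
  intro ε hε
  obtain ⟨r, hr, hrlt⟩ := exists_lt_of_csInf_lt (hne x y)
    (lt_add_of_pos_right _ (half_pos hε) : chainDist P w x y < chainDist P w x y + ε / 2)
  obtain ⟨s, hs, hslt⟩ := exists_lt_of_csInf_lt (hne y z)
    (lt_add_of_pos_right _ (half_pos hε) : chainDist P w y z < chainDist P w y z + ε / 2)
  have := csInf_le (bddBelow_wordSums hw x z) (wordSums_add x y z hr hs)
  unfold chainDist at hrlt hslt ⊢
  linarith

lemma wordSums_nonempty_of_gen (hsym : ∀ v ∈ P, v⁻¹ ∈ P)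
    (hgen : Subgroup.closure P = ⊤) (x y : G) : (wordSums P w x y).Nonempty := by
  have hmem : x⁻¹ * y ∈ Subgroup.closure P := by rw [hgen]; trivial
  have hmem2 : x⁻¹ * y ∈ Submonoid.closure (P ∪ P⁻¹) := by
    rw [← Subgroup.closure_toSubmonoid]
    exact hmem
  obtain ⟨L, hL, hLp⟩ := Submonoid.exists_list_of_mem_closure hmem2
  refine ⟨(L.map w).sum, L, ?_, ?_, rfl⟩
  · intro v hv
    rcases hL v hv with h | h
    · exact h
    · simpa using hsym v⁻¹ h
  · rw [hLp]; group

end WordDist2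
section Split

/-- Splitting a list of nonnegative weights at threshold `t`. -/
lemma exists_split_list {α : Type*} (w : α → ℝ) :
    ∀ (L : List α) (t : ℝ), (∀ x ∈ L, 0 ≤ w x) → 0 ≤ t → t ≤ (L.map w).sum → L ≠ [] →
      ∃ (A : List α) (m : α) (B : List α), L = A ++ m :: B ∧ (A.map w).sum ≤ t ∧
        (B.map w).sum ≤ (L.map w).sum - t := by
  intro L
  induction L with
  | nil => intro t _ _ _ h; exact absurd rfl h
  | cons a T ih =>
      intro t h0 ht htS _
      by_cases hc : w a ≤ t ∧ T ≠ []
      · obtain ⟨A, m, B, hT, hA, hB⟩ := ih (t - w a)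
          (fun x hx => h0 x (List.mem_cons_of_mem a hx)) (by linarith [hc.1])
          (by simp only [List.map_cons, List.sum_cons] at htS; linarith) hc.2
        refine ⟨a :: A, m, B, by rw [hT, List.cons_append], ?_, ?_⟩
        · simp only [List.map_cons, List.sum_cons]; linarith
        · simp only [hT, List.map_append, List.map_cons, List.sum_append,
            List.sum_cons] at hB ⊢
          linarith
      · refine ⟨[], a, T, rfl, by simpa using ht, ?_⟩
        simp only [List.map_cons, List.sum_cons, List.map_nil, List.sum_nil]
        push_neg at hc
        by_cases ha : w a ≤ t
        · have hT : T = [] := hc ha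
          simp only [hT, List.map_cons, List.sum_cons, List.map_nil, List.sum_nil] at htS ⊢
          linarith
        · push_neg at ha; linarith

end Split

section BKOmega

open scoped Classical

variable {G : Type*} [Group G]

/-- The Birkhoff–Kakutani weight associated to a decreasing sequence of sets. -/
noncomputable def bkOmega (V : ℕ → Set G) (x : G) : ℝ :=
  if h : ∃ n, x ∉ V n then (1/2 : ℝ) ^ (Nat.find h - 1) else 0

/-- Hypotheses for the Birkhoff–Kakutani construction. -/
structure BKSeq (V : ℕ → Set G) : Prop where
  zero : V 0 = Set.univ
  one_mem : ∀ n, (1 : G) ∈ V n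
  sym : ∀ n (x : G), x ∈ V n → x⁻¹ ∈ V n
  triple : ∀ n (a b c : G), a ∈ V (n+1) → b ∈ V (n+1) → c ∈ V (n+1) → a * b * c ∈ V n
  anti : ∀ m n, m ≤ n → V n ⊆ V m

namespace BKSeq

variable {V : ℕ → Set G} (hV : BKSeq V)
include hV

lemma omega_nonneg (x : G) : 0 ≤ bkOmega V x := by
  unfold bkOmega; split <;> positivity

lemma omega_le_one (x : G) : bkOmega V x ≤ 1 := by
  unfold bkOmega; split
  · exact pow_le_one₀ (by norm_num) (by norm_num)
  · norm_num

lemma omega_eq_zero {x : G} (h : ∀ n, x ∈ V n) : bkOmega V x = 0 := by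
  unfold bkOmega
  rw [dif_neg]
  push_neg
  exact h

lemma omega_one : bkOmega V (1 : G) = 0 := hV.omega_eq_zero hV.one_mem

lemma mem_of_omega_pos {x : G} (h : ∃ n, x ∉ V n) :
    1 ≤ Nat.find h := by
  rcases Nat.eq_zero_or_pos (Nat.find h) with h0 | h1
  · exfalso
    have := Nat.find_spec h
    rw [h0, hV.zero] at this
    exact this trivial
  · exact h1

/-- membership characterisation -/
lemma mem_iff_omega_le {x : G} {n : ℕ} : x ∈ V n ↔ bkOmega V x ≤ (1/2 : ℝ) ^ n := by
  unfold bkOmega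
  split_ifs with h
  · set k := Nat.find h with hk
    have hk1 : 1 ≤ k := hV.mem_of_omega_pos h
    constructor
    · intro hx
      have hnk : n < k := by
        by_contra hcon
        push_neg at hcon
        exact (Nat.find_spec h) (hV.anti k n hcon hx)
      exact pow_le_pow_of_le_one (by norm_num) (by norm_num) (by omega)
    · intro hle
      have : n ≤ k - 1 := by
        by_contra hcon
        push_neg at hcon
        have := pow_lt_pow_iff_right_of_lt_one₀ (show (0:ℝ) < 1/2 by norm_num)
          (show (1/2:ℝ) < 1 by norm_num) (m := n) (n := k - 1)
        have hlt : (1/2:ℝ) ^ n < (1/2:ℝ) ^ (k-1) := this.2 hcon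
        linarith
      have hnk : n < k := by omega
      have := Nat.find_min h hnk
      simpa using this
  · push_neg at h
    simp [h n, pow_nonneg (show (0:ℝ) ≤ 1/2 by norm_num) n]

/-- dyadic gap -/
lemma mem_succ_of_omega_lt {x : G} {n : ℕ} (h : bkOmega V x < (1/2 : ℝ) ^ n) :
    x ∈ V (n + 1) := by
  rw [hV.mem_iff_omega_le]
  unfold bkOmega at h ⊢
  split_ifs with hx
  · rw [dif_pos hx] at h
    have h1 : (1/2:ℝ) ^ (Nat.find hx - 1) < (1/2:ℝ) ^ n := h
    have h2 : n < Nat.find hx - 1 :=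
      (pow_lt_pow_iff_right_of_lt_one₀ (show (0:ℝ) < 1/2 by norm_num)
        (show (1/2:ℝ) < 1 by norm_num)).1 h1
    exact pow_le_pow_of_le_one (by norm_num) (by norm_num) (by omega)
  · positivity

lemma omega_inv (x : G) : bkOmega V x⁻¹ = bkOmega V x := by
  unfold bkOmega
  have hiff : ∀ n, (x⁻¹ ∉ V n) ↔ (x ∉ V n) := by
    intro n
    constructor
    · intro h hx; exact h (hV.sym n x hx)
    · intro h hx
      have := hV.sym n x⁻¹ hx
      rw [inv_inv] at this
      exact h this
  by_cases h : ∃ n, x ∉ V n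
  · have h' : ∃ n, x⁻¹ ∉ V n := by
      obtain ⟨n, hn⟩ := h; exact ⟨n, (hiff n).2 hn⟩
    rw [dif_pos h', dif_pos h]
    congr 2
    apply le_antisymm
    · exact Nat.find_min' h' ((hiff _).2 (Nat.find_spec h))
    · exact Nat.find_min' h ((hiff _).1 (Nat.find_spec h'))
  · have h' : ¬ ∃ n, x⁻¹ ∉ V n := by
      rintro ⟨n, hn⟩; exact h ⟨n, (hiff n).1 hn⟩
    rw [dif_neg h', dif_neg h]

lemma prod_mem_all {L : List G} (hL : ∀ v ∈ L, ∀ n, v ∈ V n) (n : ℕ) : L.prod ∈ V n := by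
  induction L generalizing n with
  | nil => simpa using hV.one_mem n
  | cons a T ih =>
      rw [List.prod_cons]
      have := hV.triple n a T.prod 1 (hL a (List.mem_cons_self) (n+1))
        (ih (fun v hv => hL v (List.mem_cons_of_mem a hv)) (n+1)) (hV.one_mem (n+1))
      simpa using this

/-- The key Birkhoff–Kakutani chain lemma. -/
lemma omega_chain : ∀ (N : ℕ) (L : List G), L.length ≤ N →
    bkOmega V L.prod ≤ 2 * (L.map (bkOmega V)).sum := by
  intro N
  induction N with
  | zero =>
      intro L hL
      rw [List.length_eq_zero_iff.1 (Nat.le_zero.1 hL)]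
      simp [hV.omega_one]
  | succ N ih =>
      intro L hL
      set S := (L.map (bkOmega V)).sum with hS
      have hS0 : 0 ≤ S := List.sum_nonneg (by
        intro a ha
        obtain ⟨v, hv, rfl⟩ := List.mem_map.1 ha
        exact hV.omega_nonneg v)
      rcases eq_or_lt_of_le hS0 with hS0' | hSpos
      · -- all letters have weight zero
        have hall : ∀ v ∈ L, ∀ n, v ∈ V n := by
          intro v hv n
          have hmem : bkOmega V v ∈ L.map (bkOmega V) := List.mem_map_of_mem hv
          have hle : bkOmega V v ≤ S := List.single_le_sum (by
            intro a ha
            obtain ⟨u, hu, rfl⟩ := List.mem_map.1 ha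
            exact hV.omega_nonneg u) _ hmem
          have : bkOmega V v = 0 := le_antisymm (by rw [hS0']; exact hle) (hV.omega_nonneg v)
          have hlt : bkOmega V v < (1/2:ℝ) ^ n := by
            rw [this]; positivity
          exact hV.anti n (n+1) (Nat.le_succ n) (hV.mem_succ_of_omega_lt hlt)
        have := hV.prod_mem_all hall
        rw [hV.omega_eq_zero this]
        linarith
      · by_cases hhalf : (1/2 : ℝ) ≤ S
        · calc bkOmega V L.prod ≤ 1 := hV.omega_le_one _
            _ ≤ 2 * S := by linarith
        · push_neg at hhalf
          -- find n with (1/2)^(n+1) ≤ S < (1/2)^n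
          have hex : ∃ k : ℕ, (1/2:ℝ) ^ (k + 1) ≤ S := by
            obtain ⟨k, hk⟩ := exists_pow_lt_of_lt_one hSpos (show (1/2:ℝ) < 1 by norm_num)
            exact ⟨k, by rw [pow_succ]; nlinarith [pow_nonneg (show (0:ℝ) ≤ 1/2 by norm_num) k]⟩
          set n := Nat.find hex with hn
          have hn1 : (1/2:ℝ) ^ (n + 1) ≤ S := Nat.find_spec hex
          have hn2 : S < (1/2:ℝ) ^ n := by
            rcases Nat.eq_zero_or_pos n with h0 | hpos
            · rw [h0]; norm_num; linarith
            · have := Nat.find_min hex (show n - 1 < n by omega)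
              push_neg at this
              have heq : n - 1 + 1 = n := by omega
              rwa [heq] at this
          -- L is nonempty
          have hLne : L ≠ [] := by
            rintro rfl
            simp [hS] at hSpos
          obtain ⟨A, m, B, hsplit, hA, hB⟩ := exists_split_list (bkOmega V) L (S / 2)
            (fun x _ => hV.omega_nonneg x) (by linarith) (by rw [← hS]; linarith) hLne
          have hlenA : A.length ≤ N := by
            have := congrArg List.length hsplit
            simp at this
            omega
          have hlenB : B.length ≤ N := by
            have := congrArg List.length hsplit
            simp at this
            omega
          have hAs : (A.map (bkOmega V)).sum ≤ S / 2 := hA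
          have hBs : (B.map (bkOmega V)).sum ≤ S / 2 := by
            have : (L.map (bkOmega V)).sum = S := rfl
            linarith [hB]
          have hmA : A.prod ∈ V (n+1) := by
            apply hV.mem_succ_of_omega_lt
            calc bkOmega V A.prod ≤ 2 * (A.map (bkOmega V)).sum := ih A hlenA
              _ ≤ S := by linarith
              _ < (1/2:ℝ) ^ n := hn2
          have hmB : B.prod ∈ V (n+1) := by
            apply hV.mem_succ_of_omega_lt
            calc bkOmega V B.prod ≤ 2 * (B.map (bkOmega V)).sum := ih B hlenB
              _ ≤ S := by linarith
              _ < (1/2:ℝ) ^ n := hn2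
          have hmm : m ∈ V (n+1) := by
            apply hV.mem_succ_of_omega_lt
            have hmem : bkOmega V m ∈ L.map (bkOmega V) := by
              rw [hsplit]
              exact List.mem_map_of_mem (by simp)
            have := List.single_le_sum (by
              intro a ha
              obtain ⟨u, hu, rfl⟩ := List.mem_map.1 ha
              exact hV.omega_nonneg u) _ hmem
            calc bkOmega V m ≤ S := this
              _ < (1/2:ℝ) ^ n := hn2
          have hprod : L.prod = A.prod * m * B.prod := by
            rw [hsplit]
            simp [List.prod_append, mul_assoc]
          rw [hprod]
          have := hV.triple n A.prod m B.prod hmA hmm hmB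
          calc bkOmega V (A.prod * m * B.prod) ≤ (1/2:ℝ) ^ n :=
              (hV.mem_iff_omega_le).1 this
            _ ≤ 2 * S := by
              rw [pow_succ] at hn1; linarith

end BKSeq

end BKOmega
section BK

variable {G : Type*} [Group G] [TopologicalSpace G] [IsTopologicalGroup G]
  [TopologicalSpace.MetrizableSpace G]

/-- Birkhoff–Kakutani: every metrizable topological group admits a compatible
left-invariant metric. -/
theorem exists_cli_metric : ∃ d : G → G → ℝ, IsCompatibleLeftInvariantMetric G d := by
  obtain ⟨u, hu, humul⟩ := IsTopologicalGroup.exists_antitone_basis_nhds_one G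
  have huanti : Antitone u := hu.antitone
  have humem : ∀ n, u n ∈ nhds (1 : G) := fun n => hu.toHasBasis.mem_of_mem trivial
  set s : ℕ → Set G := fun n => u n ∩ (u n)⁻¹ with hs
  set V : ℕ → Set G := fun n => if n = 0 then Set.univ else s (2 * n) with hVdef
  have hV0 : V 0 = Set.univ := by simp [hVdef]
  have hVn : ∀ n, V (n + 1) = s (2 * n + 2) := by
    intro n
    simp only [hVdef]
    rw [if_neg (Nat.succ_ne_zero n)]
    ring_nf
  have hsmem : ∀ n, s n ∈ nhds (1 : G) := by
    intro n
    exact Filter.inter_mem (humem n) (inv_mem_nhds_one G (humem n))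
  have hVnhds : ∀ n, V n ∈ nhds (1 : G) := by
    intro n
    cases n with
    | zero => rw [hV0]; exact Filter.univ_mem
    | succ n => rw [hVn]; exact hsmem _
  have hssym : ∀ n (x : G), x ∈ s n → x⁻¹ ∈ s n := by
    rintro n x ⟨h1, h2⟩
    exact ⟨Set.mem_inv.1 h2, by simpa using h1⟩
  have hsanti : ∀ m n, m ≤ n → s n ⊆ s m := by
    intro m n hmn
    exact Set.inter_subset_inter (huanti hmn) (Set.inv_subset_inv.2 (huanti hmn))
  have hV : BKSeq V := by
    refine ⟨hV0, ?_, ?_, ?_, ?_⟩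
    · intro n; exact mem_of_mem_nhds (hVnhds n)
    · intro n x hx
      cases n with
      | zero => rw [hV0]; trivial
      | succ n => rw [hVn] at hx ⊢; exact hssym _ x hx
    · -- triple
      intro n a b c ha hb hc
      cases n with
      | zero => rw [hV0]; trivial
      | succ n =>
        -- a b c ∈ s (2n+4), goal : a*b*c ∈ s (2n+2)
        have key : ∀ x y z : G, x ∈ u (2*n+4) → y ∈ u (2*n+4) → z ∈ u (2*n+4) →
            x * y * z ∈ u (2*n+2) := by
          intro x y z hx hy hz
          have hxy : x * y ∈ u (2*n+3) := humul (2*n+3) ⟨x, hx, y, hy, rfl⟩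
          exact humul (2*n+2) ⟨x*y, hxy, z, huanti (by omega) hz, rfl⟩
        rw [show (V (n+1+1)) = s (2*n+4) by rw [hVn]; ring_nf] at ha hb hc
        rw [hVn]
        have habc : a * b * c ∈ u (2*n+2) := key a b c ha.1 hb.1 hc.1
        have hinv : (a * b * c)⁻¹ ∈ u (2*n+2) := by
          have : c⁻¹ * b⁻¹ * a⁻¹ ∈ u (2*n+2) := key _ _ _
            (hssym _ c hc).1 (hssym _ b hb).1 (hssym _ a ha).1
          simpa [mul_assoc] using this
        exact ⟨habc, Set.mem_inv.2 (by simpa using hinv)⟩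
    · -- antitone
      have hsucc : ∀ n, V (n+1) ⊆ V n := by
        intro n
        cases n with
        | zero => rw [hV0]; exact fun x _ => trivial
        | succ n => rw [hVn, hVn]; exact hsanti _ _ (by omega)
      intro m n hmn
      exact antitone_nat_of_succ_le (fun n => hsucc n) hmn
  have hbasis : ∀ t ∈ nhds (1 : G), ∃ n, V n ⊆ t := by
    intro t ht
    obtain ⟨m, -, hm⟩ := hu.toHasBasis.mem_iff.1 ht
    refine ⟨m + 1, ?_⟩
    calc V (m+1) = s (2*m+2) := hVn m
      _ ⊆ u (2*m+2) := Set.inter_subset_left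
      _ ⊆ u m := huanti (by omega)
      _ ⊆ t := hm
  have hsep : ∀ x : G, x ≠ 1 → ∃ n, x ∉ V n := by
    intro x hx
    obtain ⟨n, hn⟩ := hbasis {x}ᶜ (compl_singleton_mem_nhds (Ne.symm hx))
    exact ⟨n, fun h => hn h rfl⟩
  -- the weight and chain metric
  set ω : G → ℝ := bkOmega V with hω
  set d : G → G → ℝ := chainDist Set.univ ω with hd
  have hwnn : ∀ v ∈ (Set.univ : Set G), 0 ≤ ω v := fun v _ => hV.omega_nonneg v
  have hne : ∀ x y : G, (wordSums (Set.univ : Set G) ω x y).Nonempty :=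
    fun x y => ⟨ω (x⁻¹ * y), single_mem_wordSums trivial⟩
  have homega_pos : ∀ z : G, z ≠ 1 → 0 < ω z := by
    intro z hz
    obtain ⟨n, hn⟩ := hsep z hz
    rw [hω]
    unfold bkOmega
    rw [dif_pos ⟨n, hn⟩]
    positivity
  have hlow : ∀ x y : G, ω (x⁻¹ * y) / 2 ≤ d x y := by
    intro x y
    exact le_chainDist (fun g => ω g / 2)
      (fun L hL => by
        have := hV.omega_chain L.length L le_rfl
        linarith) (hne x y)
  have hd1 : ∀ x y : G, d x y = d 1 (x⁻¹ * y) := by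
    intro x y
    have := chainDist_linv (P := (Set.univ : Set G)) (w := ω) x⁻¹ x y
    rw [inv_mul_cancel] at this
    exact this.symm
  have hdle : ∀ x y : G, d x y ≤ ω (x⁻¹ * y) := fun x y => chainDist_le_single hwnn trivial
  refine ⟨d, ⟨⟨?_, ?_, ?_⟩, ?_, ?_⟩⟩
  · -- definiteness
    intro x y
    constructor
    · intro h0
      by_contra hxy
      have hz : x⁻¹ * y ≠ 1 := fun h => hxy (inv_mul_eq_one.1 h)
      have := hlow x y
      have hpos := homega_pos _ hz
      rw [h0] at this
      linarith
    · rintro rfl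
      exact chainDist_self hwnn x
  · -- symmetry
    intro x y
    exact chainDist_symm hwnn (fun v _ => trivial) (fun v _ => hV.omega_inv v) x y
  · -- triangle
    intro x y z
    exact chainDist_triangle hwnn hne x y z
  · -- compatibility
    intro x t
    constructor
    · intro ht
      have htt : (fun y => x * y) ⁻¹' t ∈ nhds (1 : G) := by
        apply (continuous_mul_left x).continuousAt.preimage_mem_nhds
        rwa [mul_one]
      obtain ⟨n, hn⟩ := hbasis _ htt
      refine ⟨(1/2 : ℝ) ^ (n + 1), by positivity, ?_⟩
      intro y hy
      simp only [Set.mem_setOf_eq] at hy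
      have h1 : ω (x⁻¹ * y) / 2 < (1/2:ℝ) ^ (n+1) := lt_of_le_of_lt (hlow x y) hy
      have h2 : ω (x⁻¹ * y) < (1/2:ℝ) ^ n := by
        rw [pow_succ] at h1; linarith
      have := hV.mem_succ_of_omega_lt h2
      have hmem : x⁻¹ * y ∈ V n := hV.anti n (n+1) (Nat.le_succ n) this
      have := hn hmem
      simpa using this
    · rintro ⟨ε, hε, hb⟩
      obtain ⟨n, hn⟩ := exists_pow_lt_of_lt_one hε (show (1/2:ℝ) < 1 by norm_num)
      have hN : (fun y => x⁻¹ * y) ⁻¹' (V n) ∈ nhds x := by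
        apply (continuous_mul_left x⁻¹).continuousAt.preimage_mem_nhds
        rw [inv_mul_cancel]
        exact hVnhds n
      apply Filter.mem_of_superset hN
      intro y hy
      apply hb
      simp only [Set.mem_setOf_eq]
      calc d x y ≤ ω (x⁻¹ * y) := hdle x y
        _ ≤ (1/2:ℝ) ^ n := hV.mem_iff_omega_le.1 hy
        _ < ε := hn
  · -- left invariance
    intro h g f
    exact chainDist_linv h g f

end BK
section ChainMetric

open scoped Classical

variable {G : Type*} [Group G] [TopologicalSpace G] [IsTopologicalGroup G]

/-- Given a covering chain of open subgroups and a monotone weight `f`,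
we can enlarge any compatible left-invariant metric by `f` of the chain index. -/
lemma chain_subgroup_metric {d : G → G → ℝ} (hd : IsCompatibleLeftInvariantMetric G d)
    (V : ℕ → Subgroup G) (hopen : ∀ n, IsOpen (V n : Set G)) (hmono : Monotone V)
    (hcover : ∀ x : G, ∃ n, x ∈ V n) (f : ℕ → ℝ) (hf0 : f 0 = 0) (hfm : Monotone f) :
    ∃ e : G → G → ℝ, IsCompatibleLeftInvariantMetric G e ∧
      (∀ x y, d x y ≤ e x y) ∧ ∀ (g : G) (n : ℕ), g ∉ V n → f (n + 1) ≤ e 1 g := by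
  set idx : G → ℕ := fun x => Nat.find (hcover x) with hidx
  have hmem : ∀ x, x ∈ V (idx x) := fun x => Nat.find_spec (hcover x)
  have hle : ∀ x n, x ∈ V n → idx x ≤ n := fun x n h => Nat.find_min' (hcover x) h
  have hidx1 : idx 1 = 0 := Nat.le_zero.1 (hle 1 0 (one_mem _))
  have hfnn : ∀ n, 0 ≤ f n := fun n => hf0 ▸ hfm (Nat.zero_le n)
  have hidxinv : ∀ x, idx x⁻¹ = idx x := by
    intro x
    apply le_antisymm
    · exact hle _ _ (inv_mem (hmem x))
    · have := hle _ _ (inv_mem (hmem x⁻¹))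
      rwa [inv_inv] at this
  have hidxmul : ∀ x y, idx (x * y) ≤ max (idx x) (idx y) := by
    intro x y
    apply hle
    exact mul_mem (hmono (le_max_left _ _) (hmem x)) (hmono (le_max_right _ _) (hmem y))
  have hsubadd : ∀ x y, f (idx (x * y)) ≤ f (idx x) + f (idx y) := by
    intro x y
    calc f (idx (x*y)) ≤ f (max (idx x) (idx y)) := hfm (hidxmul x y)
      _ = max (f (idx x)) (f (idx y)) := (hfm.map_max).symm ▸ rfl
      _ ≤ f (idx x) + f (idx y) := max_le (by linarith [hfnn (idx y)]) (by linarith [hfnn (idx x)])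
  set e : G → G → ℝ := fun x y => d x y + f (idx (x⁻¹ * y)) with he
  have hde : ∀ x y, d x y ≤ e x y := by
    intro x y
    simp only [he]
    linarith [hfnn (idx (x⁻¹ * y))]
  refine ⟨e, ⟨⟨?_, ?_, ?_⟩, ?_, ?_⟩, hde, ?_⟩
  · intro x y
    constructor
    · intro h0
      have h1 := hd.nonneg' x y
      have h2 := hfnn (idx (x⁻¹ * y))
      simp only [he] at h0
      exact (hd.1.1 x y).1 (by linarith)
    · rintro rfl
      simp only [he, inv_mul_cancel, hidx1, hf0, (hd.1.1 x x).2 rfl]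
      ring
  · intro x y
    simp only [he]
    rw [hd.1.2.1 x y]
    congr 2
    rw [← hidxinv (x⁻¹ * y)]
    congr 1
    group
  · intro x y z
    simp only [he]
    have h1 := hd.1.2.2 x y z
    have h2 : f (idx (x⁻¹ * z)) ≤ f (idx (x⁻¹ * y)) + f (idx (y⁻¹ * z)) := by
      have : x⁻¹ * z = (x⁻¹ * y) * (y⁻¹ * z) := by group
      rw [this]
      exact hsubadd _ _
    linarith
  · -- compatibility
    intro x t
    constructor
    · intro ht
      obtain ⟨ε, hε, hb⟩ := (hd.2.1 x t).1 ht
      exact ⟨ε, hε, fun y hy => hb (lt_of_le_of_lt (hde x y) hy)⟩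
    · rintro ⟨ε, hε, hb⟩
      have hN : {y : G | d x y < ε} ∩ ((fun y => x⁻¹ * y) ⁻¹' (V 0 : Set G)) ∈ nhds x := by
        apply Filter.inter_mem (hd.ball_mem_nhds x hε)
        apply (continuous_mul_left x⁻¹).continuousAt.preimage_mem_nhds
        rw [inv_mul_cancel]
        exact (hopen 0).mem_nhds (one_mem (V 0))
      apply Filter.mem_of_superset hN
      rintro y ⟨h1, h2⟩
      apply hb
      have : idx (x⁻¹ * y) = 0 := Nat.le_zero.1 (hle _ 0 h2)
      simp only [Set.mem_setOf_eq, he, this, hf0]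
      simpa using h1
  · intro h g f'
    simp only [he]
    rw [hd.2.2 h g f']
    congr 2
    group
  · intro g n hg
    have hidxg : n + 1 ≤ idx g := by
      by_contra hcon
      push_neg at hcon
      exact hg (hmono (by omega : idx g ≤ n) (hmem g))
    have hmono2 := hfm hidxg
    have hd0 := hd.nonneg' 1 g
    simp only [he, inv_one, one_mul]
    linarith

end ChainMetric

section OBLemmas

variable {G : Type*} [Group G] [TopologicalSpace G]

lemma FiniteDiam.mono {d : G → G → ℝ} {A B : Set G} (h : FiniteDiam d B) (hAB : A ⊆ B) :
    FiniteDiam d A := by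
  obtain ⟨C, hC⟩ := h
  exact ⟨C, fun x hx y hy => hC x (hAB hx) y (hAB hy)⟩

lemma HasRelPropOB.mono {A B : Set G} (h : HasRelPropOB G B) (hAB : A ⊆ B) :
    HasRelPropOB G A := fun e he => (h e he).mono hAB

lemma HasRelPropOB.union {A B : Set G} (hA : HasRelPropOB G A) (hB : HasRelPropOB G B) :
    HasRelPropOB G (A ∪ B) := by
  intro e he
  rcases A.eq_empty_or_nonempty with rfl | ⟨a₀, ha₀⟩
  · simpa using hB e he
  rcases B.eq_empty_or_nonempty with rfl | ⟨b₀, hb₀⟩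
  · simpa using hA e he
  obtain ⟨CA, hCA⟩ := hA e he
  obtain ⟨CB, hCB⟩ := hB e he
  have hCA0 : 0 ≤ CA := le_trans (he.1.nonneg a₀ a₀) (hCA a₀ ha₀ a₀ ha₀)
  have hCB0 : 0 ≤ CB := le_trans (he.1.nonneg b₀ b₀) (hCB b₀ hb₀ b₀ hb₀)
  have hab := he.1.nonneg a₀ b₀
  refine ⟨CA + CB + e a₀ b₀, ?_⟩
  rintro x (hx | hx) y (hy | hy)
  · linarith [hCA x hx y hy]
  · calc e x y ≤ e x a₀ + e a₀ b₀ + e b₀ y :=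
        le_trans (he.1.2.2 x a₀ y) (by linarith [he.1.2.2 a₀ b₀ y])
      _ ≤ CA + CB + e a₀ b₀ := by
        have h1 := hCA x hx a₀ ha₀
        have h2 := hCB b₀ hb₀ y hy
        linarith
  · calc e x y ≤ e x b₀ + e b₀ a₀ + e a₀ y :=
        le_trans (he.1.2.2 x b₀ y) (by linarith [he.1.2.2 b₀ a₀ y])
      _ ≤ CA + CB + e a₀ b₀ := by
        have h1 := hCB x hx b₀ hb₀
        have h2 := hCA a₀ ha₀ y hy
        have h3 : e b₀ a₀ = e a₀ b₀ := he.1.2.1 b₀ a₀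
        linarith
  · linarith [hCB x hx y hy]

lemma HasRelPropOB.smul {A : Set G} (hA : HasRelPropOB G A) (g : G) :
    HasRelPropOB G ((fun x => g * x) '' A) := by
  intro e he
  obtain ⟨C, hC⟩ := hA e he
  refine ⟨C, ?_⟩
  rintro x ⟨a, ha, rfl⟩ y ⟨b, hb, rfl⟩
  rw [he.2.2 g a b]
  exact hC a ha b hb

lemma HasRelPropOB.inv {A : Set G} (hA : HasRelPropOB G A) : HasRelPropOB G A⁻¹ := by
  intro e he
  rcases A.eq_empty_or_nonempty with rfl | ⟨a₀, ha₀⟩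
  · exact ⟨0, by simp⟩
  obtain ⟨C, hC⟩ := hA e he
  refine ⟨2 * (e 1 a₀ + C), ?_⟩
  intro x hx y hy
  have hb : ∀ z : G, z ∈ A⁻¹ → e z 1 ≤ e 1 a₀ + C := by
    intro z hz
    have h1 : e 1 z⁻¹ = e z 1 := he.one_dist_inv z
    have h2 : e 1 z⁻¹ ≤ e 1 a₀ + e a₀ z⁻¹ := he.1.2.2 1 a₀ z⁻¹
    have h3 : e a₀ z⁻¹ ≤ C := hC a₀ ha₀ z⁻¹ (Set.mem_inv.1 hz)
    linarith
  have h4 := he.1.2.2 x 1 y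
  have h5 : e 1 y = e y 1 := he.1.2.1 1 y
  linarith [hb x hx, hb y hy]

end OBLemmas
section Helpers

variable {G : Type*} [Group G] [TopologicalSpace G]

lemma ball_isOpen {d : G → G → ℝ} (hd : IsCompatibleLeftInvariantMetric G d) (x : G) (ε : ℝ) :
    IsOpen {y : G | d x y < ε} := by
  rw [isOpen_iff_mem_nhds]
  intro z hz
  simp only [Set.mem_setOf_eq] at hz
  rw [hd.2.1 z]
  refine ⟨ε - d x z, by linarith, ?_⟩
  intro y hy
  simp only [Set.mem_setOf_eq] at hy ⊢
  linarith [hd.1.2.2 x z y]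

lemma subsingleton_max_metric [Subsingleton G] :
    ∃ d : G → G → ℝ, IsCompatibleLeftInvariantMetric G d ∧
      ∀ e : G → G → ℝ, IsCompatibleLeftInvariantMetric G e →
        ∃ K : ℝ, 1 ≤ K ∧ ∀ g f : G, e g f ≤ K * d g f + K := by
  refine ⟨fun _ _ => 0, ⟨⟨?_, ?_, ?_⟩, ?_, ?_⟩, ?_⟩
  · intro x y
    exact ⟨fun _ => Subsingleton.elim x y, fun _ => rfl⟩
  · intro x y; rfl
  · intro x y z; norm_num
  · intro x s
    constructor
    · intro hs
      refine ⟨1, one_pos, ?_⟩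
      intro y _
      have := mem_of_mem_nhds hs
      rwa [Subsingleton.elim y x]
    · rintro ⟨ε, hε, hb⟩
      have hx : x ∈ s := hb (by simpa using hε)
      have : s = Set.univ := Set.eq_univ_of_forall (fun y => (Subsingleton.elim y x) ▸ hx)
      rw [this]
      exact Filter.univ_mem
  · intro h g f; rfl
  · intro e he
    refine ⟨1, le_refl 1, ?_⟩
    intro g f
    have : e g f = 0 := (he.1.1 g f).2 (Subsingleton.elim g f)
    rw [this]
    norm_num

lemma subsingleton_of_closure_empty (h : Subgroup.closure (∅ : Set G) = ⊤) :
    Subsingleton G := by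
  rw [Subgroup.closure_empty] at h
  refine ⟨fun a b => ?_⟩
  have ha : a ∈ (⊥ : Subgroup G) := h ▸ Subgroup.mem_top a
  have hb : b ∈ (⊥ : Subgroup G) := h ▸ Subgroup.mem_top b
  rw [Subgroup.mem_bot] at ha hb
  rw [ha, hb]

end Helpers

section Imp12

variable {G : Type*} [Group G] [TopologicalSpace G] [IsTopologicalGroup G]

lemma imp_one_two
    (h1 : ∃ d : G → G → ℝ, IsCompatibleLeftInvariantMetric G d ∧
      ∀ e : G → G → ℝ, IsCompatibleLeftInvariantMetric G e →
        ∃ K : ℝ, 1 ≤ K ∧ ∀ g f : G, e g f ≤ K * d g f + K) :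
    ∃ U : Set G, IsOpen U ∧ HasRelPropOB G U ∧ Subgroup.closure U = ⊤ := by
  obtain ⟨d, hd, hmax⟩ := h1
  set B : ℕ → Set G := fun n => {g : G | d 1 g < (n : ℝ) + 1} with hB
  set H : ℕ → Subgroup G := fun n => Subgroup.closure (B n) with hH
  have hBopen : ∀ n, IsOpen (B n) := fun n => ball_isOpen hd 1 _
  have hBmem : ∀ n, (1 : G) ∈ B n := by
    intro n
    simp only [hB, Set.mem_setOf_eq, (hd.1.1 1 1).2 rfl]
    positivity
  have hHopen : ∀ n, IsOpen ((H n : Set G)) := by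
    intro n
    apply Subgroup.isOpen_of_mem_nhds
    apply Filter.mem_of_superset ((hBopen n).mem_nhds (hBmem n))
    exact Subgroup.subset_closure
  have hHmono : Monotone H := by
    apply monotone_nat_of_le_succ
    intro n
    apply Subgroup.closure_mono
    intro g hg
    simp only [hB, Set.mem_setOf_eq] at hg ⊢
    push_cast
    linarith
  have hHcover : ∀ x : G, ∃ n, x ∈ H n := by
    intro x
    refine ⟨⌈d 1 x⌉₊, Subgroup.subset_closure ?_⟩
    simp only [hB, Set.mem_setOf_eq]
    calc d 1 x ≤ (⌈d 1 x⌉₊ : ℝ) := Nat.le_ceil _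
      _ < _ := by linarith
  by_cases hN : ∃ N, H N = ⊤
  · obtain ⟨N, hNtop⟩ := hN
    refine ⟨B N, hBopen N, ?_, hNtop⟩
    intro e he
    obtain ⟨K, hK, hKb⟩ := hmax e he
    refine ⟨2 * K * ((N : ℝ) + 1) + K, ?_⟩
    intro x hx y hy
    simp only [hB, Set.mem_setOf_eq] at hx hy
    have h1 : d x y ≤ d x 1 + d 1 y := hd.1.2.2 x 1 y
    have h2 : d x 1 = d 1 x := hd.1.2.1 x 1
    have h3 := hKb x y
    nlinarith
  · -- all proper: contradiction
    exfalso
    push_neg at hN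
    -- infimum distances
    set S : ℕ → Set ℝ := fun n => {t : ℝ | ∃ g, g ∉ H n ∧ d 1 g = t} with hS
    have hSne : ∀ n, (S n).Nonempty := by
      intro n
      have := hN n
      rw [ne_eq, Subgroup.eq_top_iff'] at this
      push_neg at this
      obtain ⟨g, hg⟩ := this
      exact ⟨d 1 g, g, hg, rfl⟩
    have hSbdd : ∀ n, BddBelow (S n) := by
      intro n
      refine ⟨0, ?_⟩
      rintro t ⟨g, -, rfl⟩
      exact hd.nonneg' 1 g
    set r : ℕ → ℝ := fun n => sInf (S n) with hr
    have hrnn : ∀ n, 0 ≤ r n := fun n => le_csInf (hSne n) (by rintro t ⟨g, -, rfl⟩; exact hd.nonneg' 1 g)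
    have hgn : ∀ n, ∃ g, g ∉ H n ∧ d 1 g < r n + 1 := by
      intro n
      obtain ⟨t, ⟨g, hg, rfl⟩, hlt⟩ := exists_lt_of_csInf_lt (hSne n)
        (lt_add_of_pos_right (r n) one_pos)
      exact ⟨g, hg, hlt⟩
    -- the fast growing weight
    set f : ℕ → ℝ := fun n => Nat.rec 0 (fun m fm => max fm (((m : ℝ) + 1) * (r m + 2))) n with hf
    have hf0 : f 0 = 0 := rfl
    have hfsucc : ∀ n, f (n + 1) = max (f n) (((n : ℝ) + 1) * (r n + 2)) := fun n => rfl
    have hfm : Monotone f := by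
      apply monotone_nat_of_le_succ
      intro n
      rw [hfsucc]
      exact le_max_left _ _
    obtain ⟨e, he, hde, helow⟩ := chain_subgroup_metric hd H hHopen hHmono hHcover f hf0 hfm
    obtain ⟨K, hK1, hKb⟩ := hmax e he
    set n := ⌈K⌉₊ with hn
    have hKn : K ≤ (n : ℝ) := Nat.le_ceil K
    obtain ⟨g, hg, hglt⟩ := hgn n
    have hlow := helow g n hg
    have hup := hKb 1 g
    have h1 : ((n : ℝ) + 1) * (r n + 2) ≤ f (n + 1) := by
      rw [hfsucc]; exact le_max_right _ _
    have h2 : e 1 g ≤ K * (r n + 1) + K := by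
      have := hd.nonneg' 1 g
      nlinarith
    have hrn2 : 0 < r n + 2 := by linarith [hrnn n]
    nlinarith [hrnn n]

end Imp12
section Imp23

variable {G : Type*} [Group G] [TopologicalSpace G] [IsTopologicalGroup G]
  [TopologicalSpace.MetrizableSpace G]

lemma nhds_one_OB_of_gen
    (h2 : ∃ U : Set G, IsOpen U ∧ HasRelPropOB G U ∧ Subgroup.closure U = ⊤) :
    ∃ U ∈ nhds (1 : G), HasRelPropOB G U := by
  obtain ⟨U, hUo, hUOB, hUgen⟩ := h2
  rcases U.eq_empty_or_nonempty with rfl | ⟨u₀, hu₀⟩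
  · haveI := subsingleton_of_closure_empty hUgen
    refine ⟨Set.univ, Filter.univ_mem, ?_⟩
    intro e he
    refine ⟨0, fun x _ y _ => ?_⟩
    rw [(he.1.1 x y).2 (Subsingleton.elim x y)]
  · refine ⟨(fun x => u₀⁻¹ * x) '' U, ?_, hUOB.smul u₀⁻¹⟩
    have himg : (fun x => u₀⁻¹ * x) '' U = (fun x => u₀ * x) ⁻¹' U := by
      ext z
      constructor
      · rintro ⟨u, hu, rfl⟩
        simpa [← mul_assoc] using hu
      · intro hz
        exact ⟨u₀ * z, hz, by simp [← mul_assoc]⟩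
    rw [himg]
    apply ((hUo.preimage (continuous_mul_left u₀)).mem_nhds)
    simpa using hu₀

lemma imp_two_three
    (h2 : ∃ U : Set G, IsOpen U ∧ HasRelPropOB G U ∧ Subgroup.closure U = ⊤) :
    (∃ U ∈ nhds (1 : G), HasRelPropOB G U) ∧
      ¬ ∃ V : ℕ → Subgroup G, (∀ n, IsOpen (V n : Set G)) ∧ (∀ n, V n ≠ ⊤) ∧
        (∀ n, V n ≤ V (n + 1)) ∧ (⋃ n, (V n : Set G)) = Set.univ := by
  refine ⟨nhds_one_OB_of_gen h2, ?_⟩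
  rintro ⟨V, hVo, hVnt, hVle, hVcov⟩
  obtain ⟨U, hUo, hUOB, hUgen⟩ := h2
  obtain ⟨d, hd⟩ := exists_cli_metric (G := G)
  have hmono : Monotone V := monotone_nat_of_le_succ hVle
  have hcover : ∀ x : G, ∃ n, x ∈ V n := by
    intro x
    have : x ∈ ⋃ n, (V n : Set G) := hVcov ▸ Set.mem_univ x
    simpa using this
  obtain ⟨e, he, hde, helow⟩ := chain_subgroup_metric hd V hVo hmono hcover
    (fun n => (n : ℝ)) (by norm_num) (by exact_mod_cast Nat.mono_cast)
  rcases U.eq_empty_or_nonempty with rfl | ⟨u₀, hu₀⟩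
  · haveI := subsingleton_of_closure_empty hUgen
    apply hVnt 0
    rw [Subgroup.eq_top_iff']
    intro x
    rw [Subsingleton.elim x 1]
    exact one_mem _
  · obtain ⟨C, hC⟩ := hUOB e he
    obtain ⟨m, hm⟩ := hcover u₀
    set n := ⌈C⌉₊ with hn
    have hsub : U ⊆ (V (max m n) : Set G) := by
      intro u hu
      have h1 : e u₀ u ≤ C := hC u₀ hu₀ u hu
      have h2 : e 1 (u₀⁻¹ * u) = e u₀ u := by
        have := he.2.2 u₀ 1 (u₀⁻¹ * u)
        rw [mul_one, ← mul_assoc, mul_inv_cancel, one_mul] at this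
        exact this.symm
      have h3 : u₀⁻¹ * u ∈ V n := by
        by_contra hcon
        have := helow (u₀⁻¹ * u) n hcon
        have hcn : C ≤ (n : ℝ) := Nat.le_ceil C
        rw [h2] at this
        push_cast at this
        linarith
      have h4 : u₀ ∈ V (max m n) := hmono (le_max_left m n) hm
      have h5 : u₀⁻¹ * u ∈ V (max m n) := hmono (le_max_right m n) h3
      have := mul_mem h4 h5
      simpa [← mul_assoc] using this
    apply hVnt (max m n)
    rw [eq_top_iff, ← hUgen]
    exact Subgroup.closure_le (V (max m n)) |>.2 hsub

end Imp23

section Imp32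

variable {G : Type*} [Group G] [TopologicalSpace G] [IsTopologicalGroup G]
  [TopologicalSpace.MetrizableSpace G] [TopologicalSpace.SeparableSpace G]

lemma imp_three_two
    (h3 : (∃ U ∈ nhds (1 : G), HasRelPropOB G U) ∧
      ¬ ∃ V : ℕ → Subgroup G, (∀ n, IsOpen (V n : Set G)) ∧ (∀ n, V n ≠ ⊤) ∧
        (∀ n, V n ≤ V (n + 1)) ∧ (⋃ n, (V n : Set G)) = Set.univ) :
    ∃ U : Set G, IsOpen U ∧ HasRelPropOB G U ∧ Subgroup.closure U = ⊤ := by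
  obtain ⟨⟨W, hW, hWOB⟩, hnochain⟩ := h3
  obtain ⟨d, hd⟩ := exists_cli_metric (G := G)
  obtain ⟨α, hα, hball⟩ := (hd.2.1 1 W).1 hW
  set B : Set G := {g : G | d 1 g < α} with hBdef
  have hBopen : IsOpen B := ball_isOpen hd 1 α
  have hBone : (1 : G) ∈ B := by
    simp only [hBdef, Set.mem_setOf_eq, (hd.1.1 1 1).2 rfl]
    exact hα
  have hBOB : HasRelPropOB G B := hWOB.mono hball
  haveI : Nonempty G := ⟨1⟩
  set x : ℕ → G := TopologicalSpace.denseSeq G with hx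
  set H : ℕ → Subgroup G := fun n => Subgroup.closure (B ∪ x '' {i | i < n}) with hH
  have hHopen : ∀ n, IsOpen ((H n : Set G)) := by
    intro n
    apply Subgroup.isOpen_of_mem_nhds
    apply Filter.mem_of_superset (hBopen.mem_nhds hBone)
    exact fun g hg => Subgroup.subset_closure (Or.inl hg)
  have hHmono : Monotone H := by
    apply monotone_nat_of_le_succ
    intro n
    apply Subgroup.closure_mono
    apply Set.union_subset_union_right
    apply Set.image_mono
    intro i hi
    simp only [Set.mem_setOf_eq] at hi ⊢
    omega
  have hHcover : (⋃ n, ((H n : Set G))) = Set.univ := by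
    have hdir : Directed (· ≤ ·) H := hHmono.directed_le
    have hcoe : ((⨆ n, H n : Subgroup G) : Set G) = ⋃ n, ((H n : Set G)) :=
      Subgroup.coe_iSup_of_directed hdir
    have hopen : IsOpen ((⨆ n, H n : Subgroup G) : Set G) := by
      rw [hcoe]; exact isOpen_iUnion hHopen
    have hclosed : IsClosed ((⨆ n, H n : Subgroup G) : Set G) :=
      Subgroup.isClosed_of_isOpen _ hopen
    have hdense : Dense ((⨆ n, H n : Subgroup G) : Set G) := by
      apply Dense.mono _ (TopologicalSpace.denseRange_denseSeq G)
      rintro z ⟨i, rfl⟩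
      rw [hcoe]
      apply Set.mem_iUnion.2 ⟨i + 1, ?_⟩
      exact Subgroup.subset_closure (Or.inr ⟨i, by simp, rfl⟩)
    have : ((⨆ n, H n : Subgroup G) : Set G) = Set.univ := by
      rw [← hclosed.closure_eq]
      exact hdense.closure_eq
    rw [← hcoe, this]
  have hex : ∃ N, H N = ⊤ := by
    by_contra hcon
    push_neg at hcon
    exact hnochain ⟨H, hHopen, hcon, fun n => hHmono (Nat.le_succ n), hHcover⟩
  obtain ⟨N, hN⟩ := hex
  -- the generating OB open set
  set U : Set G := B ∪ ⋃ (i : ℕ) (_ : i < N), (fun z => x i * z) '' B with hU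
  refine ⟨U, ?_, ?_, ?_⟩
  · apply IsOpen.union hBopen
    apply isOpen_iUnion
    intro i
    apply isOpen_iUnion
    intro _
    have : (fun z => x i * z) '' B = (fun z => (x i)⁻¹ * z) ⁻¹' B := by
      ext z
      constructor
      · rintro ⟨b, hb, rfl⟩
        simpa [← mul_assoc] using hb
      · intro hz
        exact ⟨(x i)⁻¹ * z, hz, by simp [← mul_assoc]⟩
    rw [this]
    exact hBopen.preimage (continuous_mul_left _)
  · -- OB by induction on N
    have key : ∀ n : ℕ, HasRelPropOB G (B ∪ ⋃ (i : ℕ) (_ : i < n), (fun z => x i * z) '' B) := by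
      intro n
      induction n with
      | zero => simpa using hBOB
      | succ n ih =>
          have hstep : (B ∪ ⋃ (i : ℕ) (_ : i < n + 1), (fun z => x i * z) '' B)
              = (B ∪ ⋃ (i : ℕ) (_ : i < n), (fun z => x i * z) '' B)
                ∪ (fun z => x n * z) '' B := by
            rw [Set.biUnion_lt_succ, ← Set.union_assoc]
          rw [hstep]
          exact ih.union (hBOB.smul (x n))
    exact key N
  · rw [eq_top_iff, ← hN]
    apply Subgroup.closure_le (Subgroup.closure U) |>.2
    intro g hg
    rcases hg with hg | ⟨i, hi, rfl⟩
    · exact Subgroup.subset_closure (Or.inl hg)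
    · apply Subgroup.subset_closure
      refine Or.inr (Set.mem_iUnion.2 ⟨i, Set.mem_iUnion.2 ⟨hi, ⟨1, hBone, mul_one (x i)⟩⟩⟩)

end Imp32
section Imp21

variable {G : Type*} [Group G] [TopologicalSpace G] [IsTopologicalGroup G]
  [TopologicalSpace.MetrizableSpace G]

lemma imp_two_one
    (h2 : ∃ U : Set G, IsOpen U ∧ HasRelPropOB G U ∧ Subgroup.closure U = ⊤) :
    ∃ d : G → G → ℝ, IsCompatibleLeftInvariantMetric G d ∧
      ∀ e : G → G → ℝ, IsCompatibleLeftInvariantMetric G e →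
        ∃ K : ℝ, 1 ≤ K ∧ ∀ g f : G, e g f ≤ K * d g f + K := by
  obtain ⟨U, hUo, hUOB, hUgen⟩ := h2
  rcases U.eq_empty_or_nonempty with rfl | ⟨u₀, hu₀⟩
  · haveI := subsingleton_of_closure_empty hUgen
    exact subsingleton_max_metric
  obtain ⟨d, hd⟩ := exists_cli_metric (G := G)
  -- a small ball with property (OB)
  have hWnhds : (fun x => u₀⁻¹ * x) '' U ∈ nhds (1 : G) := by
    have himg : (fun x => u₀⁻¹ * x) '' U = (fun x => u₀ * x) ⁻¹' U := by
      ext z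
      constructor
      · rintro ⟨u, hu, rfl⟩
        simpa [← mul_assoc] using hu
      · intro hz
        exact ⟨u₀ * z, hz, by simp [← mul_assoc]⟩
    rw [himg]
    apply ((hUo.preimage (continuous_mul_left u₀)).mem_nhds)
    simpa using hu₀
  obtain ⟨α, hα, hball⟩ := (hd.2.1 1 _).1 hWnhds
  set B : Set G := {g : G | d 1 g < α} with hBdef
  have hBOB : HasRelPropOB G B := (hUOB.smul u₀⁻¹).mono hball
  have hBone : (1 : G) ∈ B := by
    simp only [hBdef, Set.mem_setOf_eq, (hd.1.1 1 1).2 rfl]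
    exact hα
  -- the generating set V
  set V : Set G := B ∪ (U ∪ U⁻¹) with hVdef
  have hVOB : HasRelPropOB G V := hBOB.union (hUOB.union hUOB.inv)
  have hVsym : ∀ v ∈ V, v⁻¹ ∈ V := by
    rintro v (hv | hv | hv)
    · left
      simp only [hBdef, Set.mem_setOf_eq] at hv ⊢
      rwa [hd.one_dist_inv' v]
    · right; right; exact Set.inv_mem_inv.2 hv
    · right; left; simpa using hv
  have hVgen : Subgroup.closure V = ⊤ := by
    rw [eq_top_iff, ← hUgen]
    exact Subgroup.closure_mono (fun g hg => Or.inr (Or.inl hg))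
  set w : G → ℝ := fun v => d 1 v with hwdef
  have hw : ∀ v ∈ V, 0 ≤ w v := fun v _ => hd.nonneg' 1 v
  have hwsym : ∀ v ∈ V, w v⁻¹ = w v := fun v _ => hd.one_dist_inv' v
  have hne : ∀ x y : G, (wordSums V w x y).Nonempty :=
    fun x y => wordSums_nonempty_of_gen hVsym hVgen x y
  set ρ : G → G → ℝ := chainDist V w with hρdef
  have hρd : ∀ x y, d x y ≤ ρ x y := by
    intro x y
    have h2 : d 1 (x⁻¹ * y) ≤ chainDist V w x y :=
      le_chainDist (P := V) (w := w) (fun g => d 1 g) (fun L hL => hd.one_dist_list_prod L)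
        (hne x y)
    rw [hd.eq_one_dist x y]
    exact h2
  have hρle : ∀ x y : G, x⁻¹ * y ∈ V → ρ x y ≤ d x y := by
    intro x y hxy
    rw [hd.eq_one_dist x y]
    exact chainDist_le_single hw hxy
  have hρ : IsCompatibleLeftInvariantMetric G ρ := by
    refine ⟨⟨?_, ?_, ?_⟩, ?_, ?_⟩
    · intro x y
      constructor
      · intro h0
        have h1 := hρd x y
        have h2 := hd.nonneg' x y
        exact (hd.1.1 x y).1 (by linarith)
      · rintro rfl
        exact chainDist_self hw x
    · exact chainDist_symm hw hVsym hwsym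
    · exact chainDist_triangle hw hne
    · intro x t
      constructor
      · intro ht
        obtain ⟨ε, hε, hb⟩ := (hd.2.1 x t).1 ht
        exact ⟨ε, hε, fun y hy => hb (lt_of_le_of_lt (hρd x y) hy)⟩
      · rintro ⟨ε, hε, hb⟩
        have hN : {y : G | d x y < min ε α} ∈ nhds x :=
          hd.ball_mem_nhds x (lt_min hε hα)
        apply Filter.mem_of_superset hN
        intro y hy
        simp only [Set.mem_setOf_eq] at hy
        apply hb
        have hmem : x⁻¹ * y ∈ B := by
          simp only [hBdef, Set.mem_setOf_eq]
          rw [← hd.eq_one_dist x y]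
          exact lt_of_lt_of_le hy (min_le_right _ _)
        have := hρle x y (Or.inl hmem)
        simp only [Set.mem_setOf_eq]
        calc ρ x y ≤ d x y := this
          _ < ε := lt_of_lt_of_le hy (min_le_left _ _)
    · exact fun h g f => chainDist_linv h g f
  refine ⟨ρ, hρ, ?_⟩
  -- maximality
  intro e he
  obtain ⟨C, hC⟩ := hVOB e he
  have hC1 : ∀ v ∈ V, e 1 v ≤ C := fun v hv => hC 1 (Or.inl hBone) v hv
  have hC0 : 0 ≤ C := le_trans (he.nonneg' 1 1) (hC 1 (Or.inl hBone) 1 (Or.inl hBone))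
  set c : ℝ := 2 * C / α with hc
  have hc0 : 0 ≤ c := by positivity
  -- the merging lemma
  have merge : ∀ N : ℕ, ∀ L : List G, L.length ≤ N → (∀ v ∈ L, v ∈ V) →
      e 1 L.prod ≤ c * (L.map w).sum + C := by
    intro N
    induction N with
    | zero =>
        intro L hL _
        rw [List.length_eq_zero_iff.1 (Nat.le_zero.1 hL)]
        simpa [(he.1.1 1 1).2 rfl] using hC0
    | succ N ih =>
        intro L hlen hletters
        match L with
        | [] => simpa [(he.1.1 1 1).2 rfl] using hC0
        | [a] =>
            have h1 : e 1 a ≤ C := hC1 a (hletters a (by simp))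
            have h2 : 0 ≤ w a := hw a (hletters a (by simp))
            simp only [List.prod_cons, List.prod_nil, mul_one, List.map_cons,
              List.map_nil, List.sum_cons, List.sum_nil, add_zero]
            nlinarith
        | a :: b :: t =>
            have ha : a ∈ V := hletters a (by simp)
            have hb : b ∈ V := hletters b (by simp)
            have hat : ∀ v ∈ t, v ∈ V := fun v hv => hletters v (by simp [hv])
            by_cases hab : d 1 a + d 1 b < α
            · -- merge a and b
              have habV : a * b ∈ V := by
                left
                simp only [hBdef, Set.mem_setOf_eq]
                calc d 1 (a * b) ≤ d 1 a + d 1 b := hd.one_dist_mul a b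
                  _ < α := hab
              have hlen' : ((a * b) :: t).length ≤ N := by
                simp only [List.length_cons] at hlen ⊢
                omega
              have hlet' : ∀ v ∈ (a * b) :: t, v ∈ V := by
                intro v hv
                rcases List.mem_cons.1 hv with rfl | hv
                · exact habV
                · exact hat v hv
              have hih := ih ((a * b) :: t) hlen' hlet'
              have hprodeq : (a :: b :: t).prod = ((a * b) :: t).prod := by
                simp [List.prod_cons, mul_assoc]
              rw [hprodeq]
              have hsum : ((((a*b) :: t)).map w).sum ≤ ((a :: b :: t).map w).sum := by
                simp only [List.map_cons, List.sum_cons]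
                have : w (a * b) ≤ w a + w b := hd.one_dist_mul a b
                linarith
              nlinarith
            · -- peel off two letters
              push_neg at hab
              have hlent : t.length ≤ N := by
                simp only [List.length_cons] at hlen
                omega
              have hih := ih t hlent hat
              have hsplit : e 1 (a :: b :: t).prod ≤ e 1 a + e 1 b + e 1 t.prod := by
                simp only [List.prod_cons]
                calc e 1 (a * (b * t.prod)) ≤ e 1 a + e 1 (b * t.prod) :=
                    he.one_dist_mul a (b * t.prod)
                  _ ≤ e 1 a + (e 1 b + e 1 t.prod) := by linarith [he.one_dist_mul b t.prod]
                  _ = e 1 a + e 1 b + e 1 t.prod := by ring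
              have h2C : 2 * C ≤ c * (w a + w b) := by
                have : c * α ≤ c * (w a + w b) := by
                  apply mul_le_mul_of_nonneg_left _ hc0
                  exact hab
                have hcα : c * α = 2 * C := by
                  rw [hc]; field_simp
                linarith
              have hsum : ((a :: b :: t).map w).sum = w a + w b + (t.map w).sum := by
                simp only [List.map_cons, List.sum_cons]; ring
              have hea : e 1 a ≤ C := hC1 a ha
              have heb : e 1 b ≤ C := hC1 b hb
              rw [hsum]
              nlinarith
  -- conclude maximality
  refine ⟨max 1 (c + C), le_max_left _ _, ?_⟩
  intro g f
  have hbound : ∀ r ∈ wordSums V w g f, e g f ≤ c * r + C := by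
    rintro r ⟨L, hL, hprod, rfl⟩
    have : g⁻¹ * f = L.prod := by rw [← hprod]; group
    rw [he.eq_one_dist g f, this]
    exact merge L.length L le_rfl hL
  have hmain : e g f ≤ c * ρ g f + C := by
    apply le_of_forall_pos_le_add
    intro δ hδ
    have hδ' : 0 < δ / (c + 1) := by positivity
    obtain ⟨r, hr, hrlt⟩ := exists_lt_of_csInf_lt (hne g f)
      (lt_add_of_pos_right (chainDist V w g f) hδ')
    have h1 := hbound r hr
    have h2 : c * r ≤ c * (ρ g f + δ / (c + 1)) := by
      apply mul_le_mul_of_nonneg_left _ hc0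
      exact le_of_lt hrlt
    have h3 : c * (δ / (c + 1)) ≤ δ := by
      rw [mul_comm, div_mul_eq_mul_div, div_le_iff₀ (by positivity : (0:ℝ) < c + 1)]
      nlinarith
    nlinarith
  have hρ0 : 0 ≤ ρ g f := chainDist_nonneg hw (hne g f)
  have hcK : c ≤ max 1 (c + C) := le_trans (by linarith) (le_max_right 1 (c + C))
  have hCK : C ≤ max 1 (c + C) := le_trans (by linarith) (le_max_right 1 (c + C))
  nlinarith [mul_le_mul_of_nonneg_right hcK hρ0]

end Imp21

theorem exists_maximal_metric_tfae {G : Type*} [Group G] [TopologicalSpace G]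
    [IsTopologicalGroup G] [TopologicalSpace.MetrizableSpace G]
    [TopologicalSpace.SeparableSpace G] :
    List.TFAE
      [ -- (1) G admits a maximal compatible left-invariant metric
        ∃ d : G → G → ℝ, IsCompatibleLeftInvariantMetric G d ∧
          ∀ e : G → G → ℝ, IsCompatibleLeftInvariantMetric G e →
            ∃ K : ℝ, 1 ≤ K ∧ ∀ g f : G, e g f ≤ K * d g f + K,
        -- (2) G is generated by an open set with property (OB) relative to G
        ∃ U : Set G, IsOpen U ∧ HasRelPropOB G U ∧ Subgroup.closure U = ⊤,
        -- (3) local property (OB) and not a union of a countable chain of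
        -- proper open subgroups
        (∃ U ∈ nhds (1 : G), HasRelPropOB G U) ∧
          ¬ ∃ V : ℕ → Subgroup G, (∀ n, IsOpen (V n : Set G)) ∧ (∀ n, V n ≠ ⊤) ∧
            (∀ n, V n ≤ V (n + 1)) ∧ (⋃ n, (V n : Set G)) = Set.univ ] := by
  
  tfae_have 1 → 2 := imp_one_two
  tfae_have 2 → 3 := imp_two_three
  tfae_have 3 → 2 := imp_three_two
  tfae_have 2 → 1 := imp_two_one
  tfae_finish
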